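/- Let (S_t)_{t≥0} be a subordinator with Laplace exponent B (i.e. E[e^{−λ S_t}] = e^{−t B(λ)} for all λ, t ≥ 0), where B is a Bernstein function satisfying B(r) ≥ a r^α − b for constants a>0, b≥0, α ∈ (0,1]. Then for every p > form 0 there is a constant c > 0 with E[(min(1, S_ε))^{−p}] ≤ c (1 + ε^{−p/α}) for all ε ∈ (0,1), using the identity E[S_ε^{−p}] = (1/Γ(p)) ∫_0^∞ t^{p−1} e^{−ε B(t)} dt. -/

import Mathlib

open Set Real MeasureTheory

lemma aux_integrableOn {s α b : ℝ} (hs : -1 < s) (hα : 0 < α) (hb : 0 < b) :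
    IntegrableOn (fun x : ℝ => x ^ s * Real.exp (-b * x ^ α)) (Ioi 0) := by
  have hαinv : (α⁻¹ : ℝ) ≠ 0 := by positivity
  rw [← integrableOn_Ioi_comp_rpow_iff' _ hαinv]
  have h1 : (-1 : ℝ) < (s + 1) / α - 1 := by
    have : 0 < (s + 1) / α := div_pos (by linarith) hα
    linarith
  have h := integrableOn_rpow_mul_exp_neg_mul_rpow (s := (s + 1) / α - 1) (p := 1) h1 one_pos hb
  refine h.congr_fun (fun x hx => ?_) measurableSet_Ioi
  have hx0 : (0:ℝ) < x := hx
  have e1 : (x ^ (α⁻¹:ℝ) : ℝ) ^ α = x := by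
    rw [← rpow_mul hx0.le, inv_mul_cancel₀ hα.ne', rpow_one]
  have e2 : (x ^ (α⁻¹:ℝ) : ℝ) ^ s = x ^ (α⁻¹ * s) := by rw [← rpow_mul hx0.le]
  beta_reduce
  rw [smul_eq_mul, rpow_one, e1, e2, ← mul_assoc, ← rpow_add hx0]
  congr 1
  congr 1
  field_simp
  ring

/-- If `S_ε` has Laplace transform `e^{−ε B(λ)}` with
`B(r) ≥ a r^α − b`, then for every `p > 0` there is `c > 0` with
`E[(min(1, S_ε))^{−p}] ≤ c (1 + ε^{−p/α})` for all `ε ∈ (0,1)`. -/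
theorem stmt_3 {Ω : Type*} [MeasurableSpace Ω] (μ : Measure Ω) [IsProbabilityMeasure μ]
    (B : ℝ → ℝ) (S : ℝ → Ω → ℝ) (a b α p : ℝ)
    (ha : 0 < a) (hb : 0 ≤ b) (hα : α ∈ Set.Ioc (0:ℝ) 1) (hp : 0 < p)
    (hBlb : ∀ r : ℝ, 0 ≤ r → a * r ^ α - b ≤ B r)
    (hSnonneg : ∀ ε ∈ Set.Ioo (0:ℝ) 1, ∀ ω, 0 ≤ S ε ω)
    (hLaplace : ∀ ε ∈ Set.Ioo (0:ℝ) 1, ∀ l : ℝ, 0 ≤ l →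
      ∫ ω, Real.exp (-l * S ε ω) ∂μ = Real.exp (-ε * B l))
    (hIdentity : ∀ ε ∈ Set.Ioo (0:ℝ) 1,
      ∫ ω, (S ε ω) ^ (-p) ∂μ =
        (1 / Real.Gamma p) * ∫ t in Set.Ioi (0:ℝ), t ^ (p - 1) * Real.exp (-ε * B t)) :
    ∃ c : ℝ, 0 < c ∧ ∀ ε ∈ Set.Ioo (0:ℝ) 1,
      ∫ ω, (min 1 (S ε ω)) ^ (-p) ∂μ ≤ c * (1 + ε ^ (-(p / α))) := by
  obtain ⟨hα0, hα1⟩ := hα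
  have hΓp : 0 < Real.Gamma p := Real.Gamma_pos_of_pos hp
  have hΓα : 0 < Real.Gamma (p / α) := Real.Gamma_pos_of_pos (by positivity)
  set D : ℝ := (1 / Real.Gamma p) *
      (Real.exp b * (a ^ (-(p / α)) * ((1 / α) * Real.Gamma (p / α)))) with hD
  have hD0 : 0 < D := by positivity
  refine ⟨1 + D, by linarith, fun ε hε => ?_⟩
  obtain ⟨hε0, hε1⟩ := hε
  have hE0 : (0:ℝ) ≤ ε ^ (-(p / α)) := rpow_nonneg hε0.le _
  by_cases hfint : Integrable (fun ω => (min 1 (S ε ω)) ^ (-p)) μ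
  swap
  · rw [integral_undef hfint]
    nlinarith
  -- a.e. measurability of S ε from the Laplace transform
  have hexp_int : Integrable (fun ω => Real.exp (-(1:ℝ) * S ε ω)) μ := by
    by_contra h
    have h2 := hLaplace ε ⟨hε0, hε1⟩ 1 zero_le_one
    rw [integral_undef h] at h2
    exact (Real.exp_pos _).ne h2
  have hS_meas : AEMeasurable (S ε) μ := by
    have h1 : AEMeasurable (fun ω => -Real.log (Real.exp (-(1:ℝ) * S ε ω))) μ :=
      (measurable_log.comp_aemeasurable hexp_int.aestronglyMeasurable.aemeasurable).neg
    simpa [Real.log_exp] using h1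
  have hSp_meas : AEStronglyMeasurable (fun ω => (S ε ω) ^ (-p)) μ :=
    (hS_meas.pow_const (-p)).aestronglyMeasurable
  have hSnn : ∀ ω, 0 ≤ S ε ω := hSnonneg ε ⟨hε0, hε1⟩
  have hSp_le : ∀ ω, (S ε ω) ^ (-p) ≤ 1 + (min 1 (S ε ω)) ^ (-p) := by
    intro ω
    rcases le_total 1 (S ε ω) with h | h
    · have h1 : (S ε ω) ^ (-p) ≤ 1 :=
        Real.rpow_le_one_of_one_le_of_nonpos h (by linarith)
      have h2 : 0 ≤ (min 1 (S ε ω)) ^ (-p) :=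
        rpow_nonneg (le_min zero_le_one (hSnn ω)) _
      linarith
    · rw [min_eq_right h]
      linarith
  have hf_le : ∀ ω, (min 1 (S ε ω)) ^ (-p) ≤ 1 + (S ε ω) ^ (-p) := by
    intro ω
    rcases le_total 1 (S ε ω) with h | h
    · rw [min_eq_left h, Real.one_rpow]
      have := rpow_nonneg (hSnn ω) (-p)
      linarith
    · rw [min_eq_right h]
      linarith
  have hSp_int : Integrable (fun ω => (S ε ω) ^ (-p)) μ := by
    refine Integrable.mono' ((integrable_const 1).add hfint) hSp_meas (ae_of_all _ fun ω => ?_)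
    rw [Real.norm_eq_abs, abs_of_nonneg (rpow_nonneg (hSnn ω) _)]
    exact hSp_le ω
  have step1 : ∫ ω, (min 1 (S ε ω)) ^ (-p) ∂μ ≤ 1 + ∫ ω, (S ε ω) ^ (-p) ∂μ := by
    have hadd : Integrable (fun ω => 1 + S ε ω ^ (-p)) μ := (integrable_const 1).add hSp_int
    have h := integral_mono hfint hadd hf_le
    rwa [integral_add (integrable_const 1) hSp_int, integral_const, probReal_univ,
      smul_eq_mul, one_mul] at h
  have hba : 0 < ε * a := mul_pos hε0 ha
  have hg_int : IntegrableOn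
      (fun t : ℝ => Real.exp b * (t ^ (p - 1) * Real.exp (-(ε * a) * t ^ α))) (Ioi 0) :=
    (aux_integrableOn (by linarith) hα0 hba).const_mul _
  have hJ_le : (∫ t in Ioi (0:ℝ), t ^ (p - 1) * Real.exp (-ε * B t)) ≤
      Real.exp b * ∫ t in Ioi (0:ℝ), t ^ (p - 1) * Real.exp (-(ε * a) * t ^ α) := by
    rw [← integral_const_mul]
    refine integral_mono_of_nonneg ?_ hg_int ?_
    · filter_upwards [ae_restrict_mem measurableSet_Ioi] with t ht
      have ht0 : (0:ℝ) < t := ht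
      positivity
    · filter_upwards [ae_restrict_mem measurableSet_Ioi] with t ht
      have ht0 : (0:ℝ) < t := ht
      have hBt := hBlb t ht0.le
      have key : Real.exp (-ε * B t) ≤ Real.exp b * Real.exp (-(ε * a) * t ^ α) := by
        rw [← Real.exp_add]
        apply Real.exp_le_exp.2
        have h1 : ε * (a * t ^ α - b) ≤ ε * B t := mul_le_mul_of_nonneg_left hBt hε0.le
        have h2 : ε * b ≤ b := mul_le_of_le_one_left hb hε1.le
        nlinarith
      calc t ^ (p - 1) * Real.exp (-ε * B t)
          ≤ t ^ (p - 1) * (Real.exp b * Real.exp (-(ε * a) * t ^ α)) :=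
            mul_le_mul_of_nonneg_left key (rpow_nonneg ht0.le _)
        _ = Real.exp b * (t ^ (p - 1) * Real.exp (-(ε * a) * t ^ α)) := by ring
  have hval : (∫ t in Ioi (0:ℝ), t ^ (p - 1) * Real.exp (-(ε * a) * t ^ α))
      = (ε * a) ^ (-(p / α)) * (1 / α) * Real.Gamma (p / α) := by
    have h := integral_rpow_mul_exp_neg_mul_rpow (q := p - 1) hα0 (by linarith) hba
    simpa [sub_add_cancel, neg_div] using h
  have hmul : (ε * a) ^ (-(p / α)) = ε ^ (-(p / α)) * a ^ (-(p / α)) :=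
    Real.mul_rpow hε0.le ha.le
  have hId := hIdentity ε ⟨hε0, hε1⟩
  calc ∫ ω, (min 1 (S ε ω)) ^ (-p) ∂μ
      ≤ 1 + ∫ ω, (S ε ω) ^ (-p) ∂μ := step1
    _ = 1 + (1 / Real.Gamma p) * ∫ t in Ioi (0:ℝ), t ^ (p - 1) * Real.exp (-ε * B t) := by
        rw [hId]
    _ ≤ 1 + (1 / Real.Gamma p) *
          (Real.exp b * ((ε * a) ^ (-(p / α)) * (1 / α) * Real.Gamma (p / α))) := by
        have h := hJ_le
        rw [hval] at h
        have h2 := mul_le_mul_of_nonneg_left h (le_of_lt (by positivity :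
          (0:ℝ) < 1 / Real.Gamma p))
        have e : Real.exp b * ((ε * a) ^ (-(p / α)) * (1 / α) * Real.Gamma (p / α)) =
            Real.exp b * ((ε * a) ^ (-(p / α)) * (1 / α) * Real.Gamma (p / α)) := rfl
        linarith
    _ = 1 + D * ε ^ (-(p / α)) := by
        rw [hmul, hD]
        ring
    _ ≤ (1 + D) * (1 + ε ^ (-(p / α))) := by nlinarith
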